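/- Let R be a commutative ring, n a natural number with 2 ≤ n, d : ZMod n → R, and let M(d) be the cyclic bidiagonal matrix. Then for all i j : ZMod n, the adjugate satisfies adjugate (M(d)) j i = ∏_{l ∈ Finset.range ((j - i - 1 : ZMod n).val)} d (i + 1 + l). Equivalently, the (i,j)-cofactor of M(d) (the signed determinant of the minor obtained by deleting row i and column j) equals the product of the diagonal entries d k over the cyclic interval of indices strictly between i and j (the empty product 1 when j = i + 1, and the product of all d k with k ≠ i when j = i). -/

import Mathlib

open Finset Equiv

/-- Partial cyclic shift as a product of transpositions. -/
def cyc {n : ℕ} [NeZero n] (i : ZMod n) : ℕ → Equiv.Perm (ZMod n)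
  | 0 => 1
  | s + 1 => cyc i s * Equiv.swap (i - s) (i - s - 1)

lemma cyc_sign {n : ℕ} [NeZero n] (h1 : (1 : ZMod n) ≠ 0) (i : ZMod n) (m : ℕ) :
    Equiv.Perm.sign (cyc i m) = (-1) ^ m := by
  induction m with
  | zero => simp [cyc]
  | succ s ih =>
    have hne : (i - (s : ZMod n)) ≠ i - s - 1 := by
      intro h
      apply h1
      have := sub_eq_zero.mpr h
      simpa [sub_sub_cancel] using (by linear_combination this : (1 : ZMod n) = 0)
    rw [cyc, map_mul, ih, Equiv.Perm.sign_swap hne, pow_succ]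

lemma cyc_apply {n : ℕ} [NeZero n] (h1 : (1 : ZMod n) ≠ 0) (i : ZMod n) :
    ∀ m, m < n → ∀ k, cyc i m k =
      if (i - k).val < m then k - 1 else if (i - k).val = m then i else k := by
  intro m
  induction m with
  | zero =>
    intro _ k
    by_cases hk : k = i
    · subst hk; simp [cyc]
    · have hne : (i - k).val ≠ 0 := by
        rw [Ne, ZMod.val_eq_zero, sub_eq_zero]
        exact fun h => hk h.symm
      simp [cyc, hne]
  | succ m ih =>
    intro hm k
    have hm' : m < n := Nat.lt_of_succ_lt hm
    have hms : ((m : ZMod n)).val = m := ZMod.val_cast_of_lt hm'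
    have hswapne : (i - (m : ZMod n)) ≠ i - m - 1 := by
      intro h
      apply h1
      have := sub_eq_zero.mpr h
      linear_combination this
    have key : ∀ x : ZMod n, (i - x).val = m → x = i - m := by
      intro x hx
      have : ((i - x).val : ZMod n) = ((m : ℕ) : ZMod n) := by rw [hx]
      rw [ZMod.natCast_val, ZMod.cast_id] at this
      linear_combination -this
    have key1 : ∀ x : ZMod n, (i - x).val = m + 1 → x = i - m - 1 := by
      intro x hx
      have : ((i - x).val : ZMod n) = ((m + 1 : ℕ) : ZMod n) := by rw [hx]
      rw [ZMod.natCast_val, ZMod.cast_id] at this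
      push_cast at this
      linear_combination -this
    show (cyc i m) (Equiv.swap (i - m) (i - m - 1) k) = _
    by_cases hk1 : k = i - m
    · subst hk1
      rw [Equiv.swap_apply_left, ih hm']
      have hv : (i - (i - (m : ZMod n) - 1)).val = m + 1 := by
        have : i - (i - (m : ZMod n) - 1) = ((m + 1 : ℕ) : ZMod n) := by push_cast; ring
        rw [this, ZMod.val_cast_of_lt hm]
      have hv0 : (i - (i - (m : ZMod n))).val = m := by
        have : i - (i - (m : ZMod n)) = ((m : ℕ) : ZMod n) := by ring
        rw [this, hms]
      rw [hv0]
      simp only [if_neg (lt_irrefl m), if_pos rfl, if_pos (by omega : m < m + 1)]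
      rw [hv, if_neg (by omega : ¬ m + 1 < m), if_neg (by omega : ¬ m + 1 = m)]
    · by_cases hk2 : k = i - m - 1
      · subst hk2
        rw [Equiv.swap_apply_right, ih hm']
        have hv0 : (i - (i - (m : ZMod n))).val = m := by
          have : i - (i - (m : ZMod n)) = ((m : ℕ) : ZMod n) := by ring
          rw [this, hms]
        have hv : (i - (i - (m : ZMod n) - 1)).val = m + 1 := by
          have : i - (i - (m : ZMod n) - 1) = ((m + 1 : ℕ) : ZMod n) := by push_cast; ring
          rw [this, ZMod.val_cast_of_lt hm]
        rw [hv0, hv]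
        simp [lt_irrefl]
      · rw [Equiv.swap_apply_of_ne_of_ne hk1 hk2, ih hm' k]
        have hum : (i - k).val ≠ m := fun h => hk1 (key k h)
        have hum1 : (i - k).val ≠ m + 1 := fun h => hk2 (key1 k h)
        by_cases hlt : (i - k).val < m
        · rw [if_pos hlt, if_pos (by omega)]
        · rw [if_neg hlt, if_neg hum, if_neg (by omega), if_neg hum1]

theorem stmt_2 {R : Type*} [CommRing R] (n : ℕ) (hn : 2 ≤ n) [NeZero n]
    (d : ZMod n → R) (M : Matrix (ZMod n) (ZMod n) R)
    (hdiag : ∀ i : ZMod n, M i i = d i)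
    (hsub : ∀ i : ZMod n, M i (i + 1) = -1)
    (hzero : ∀ i j : ZMod n, j ≠ i → j ≠ i + 1 → M i j = 0) :
    ∀ i j : ZMod n,
      M.adjugate j i =
        ∏ l ∈ Finset.range ((j - i - 1 : ZMod n).val), d (i + 1 + (l : ZMod n)) := by
  haveI : Fact (1 < n) := ⟨by omega⟩
  intro i j
  have h1 : (1 : ZMod n) ≠ 0 := one_ne_zero
  set L := (i - j).val with hLdef
  set K := (j - i - 1).val with hKdef
  have hLn : L < n := ZMod.val_lt _
  have hKn : K < n := ZMod.val_lt _
  have hback : ∀ x : ZMod n, ((x.val : ℕ) : ZMod n) = x := by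
    intro x; rw [ZMod.natCast_val, ZMod.cast_id]
  have hKL : K = n - 1 - L := by
    have h : (j - i - 1 : ZMod n) = ((n - 1 - L : ℕ) : ZMod n) := by
      have hLc : ((L : ℕ) : ZMod n) = i - j := hback _
      have hc : ((n - 1 - L : ℕ) : ZMod n) = (n : ZMod n) - 1 - L := by
        have h' : n - 1 - L + (1 + L) = n := by omega
        have h'' := congrArg (Nat.cast : ℕ → ZMod n) h'
        push_cast at h''
        linear_combination h''
      rw [hc, ZMod.natCast_self, hLc]; ring
    rw [hKdef, h, ZMod.val_cast_of_lt (by omega)]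
  set σ₀ := cyc i L with hσ₀def
  have hσ₀ : ∀ k, σ₀ k =
      if (i - k).val < L then k - 1 else if (i - k).val = L then i else k :=
    cyc_apply h1 i L hLn
  set B := M.updateRow i (Pi.single j (1 : R)) with hBdef
  have hBrow : ∀ k, B i k = if k = j then 1 else 0 := by
    intro k
    rw [hBdef, Matrix.updateRow_self]
    simp [Pi.single_apply]
  have hBoth : ∀ a k, a ≠ i → B a k = M a k := by
    intro a k h
    rw [hBdef, Matrix.updateRow_ne h]
  rw [Matrix.adjugate_apply, Matrix.det_apply]
  rw [Finset.sum_eq_single_of_mem σ₀ (Finset.mem_univ _) ?_]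
  · -- main term
    rw [← hBdef]
    have hsign : Equiv.Perm.sign σ₀ = (-1) ^ L := cyc_sign h1 i L
    have hreindex : ∏ k, B (σ₀ k) k =
        ∏ t ∈ Finset.range n, B (σ₀ (i + 1 + (t : ZMod n))) (i + 1 + (t : ZMod n)) := by
      refine Finset.prod_bij' (fun k _ => (k - i - 1).val)
        (fun t _ => i + 1 + (t : ZMod n)) ?_ ?_ ?_ ?_ ?_
      · intro k _; exact Finset.mem_range.mpr (ZMod.val_lt _)
      · intro t _; exact Finset.mem_univ _
      · intro k _
        beta_reduce
        have := hback (k - i - 1)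
        linear_combination this
      · intro t ht
        beta_reduce
        have h' : i + 1 + (t : ZMod n) - i - 1 = (t : ZMod n) := by ring
        rw [h', ZMod.val_cast_of_lt (Finset.mem_range.mp ht)]
      · intro k _
        beta_reduce
        have hk : i + 1 + (((k - i - 1).val : ℕ) : ZMod n) = k := by
          have := hback (k - i - 1); linear_combination this
        rw [hk]
    have hcongr : ∀ t ∈ Finset.range n,
        B (σ₀ (i + 1 + (t : ZMod n))) (i + 1 + (t : ZMod n)) =
          (if t < K then d (i + 1 + (t : ZMod n)) else if t = K then (1 : R) else -1) := by
      intro t ht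
      have htn : t < n := Finset.mem_range.mp ht
      have hval : (i - (i + 1 + (t : ZMod n))).val = n - 1 - t := by
        have hc : i - (i + 1 + (t : ZMod n)) = ((n - 1 - t : ℕ) : ZMod n) := by
          have h' : (n - 1 - t) + (1 + t) = n := by omega
          have h'' := congrArg (Nat.cast : ℕ → ZMod n) h'
          push_cast at h''
          rw [ZMod.natCast_self] at h''
          linear_combination -h''
        rw [hc, ZMod.val_cast_of_lt (by omega)]
      by_cases ht1 : t < K
      · rw [hσ₀, hval, if_neg (by omega), if_neg (by omega)]
        have hki : i + 1 + (t : ZMod n) ≠ i := by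
          intro h
          have hc : ((t + 1 : ℕ) : ZMod n) = 0 := by push_cast; linear_combination h
          have hv := ZMod.val_cast_of_lt (show t + 1 < n by omega)
          rw [hc, ZMod.val_zero] at hv
          omega
        rw [hBoth _ _ hki, hdiag, if_pos ht1]
      · by_cases ht2 : t = K
        · subst ht2
          have hkj : i + 1 + ((K : ℕ) : ZMod n) = j := by
            have := hback (j - i - 1); linear_combination this
          have hrow : σ₀ (i + 1 + ((K : ℕ) : ZMod n)) = i := by
            rw [hσ₀, hval, if_neg (by omega), if_pos (by omega)]
          rw [hrow, hBrow, if_pos hkj, if_neg (lt_irrefl K), if_pos rfl]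
        · rw [hσ₀, hval, if_pos (by omega)]
          have hk1 : i + 1 + (t : ZMod n) - 1 = i + (t : ZMod n) := by ring
          have hrowne : i + (t : ZMod n) ≠ i := by
            intro h
            have hc : (t : ZMod n) = 0 := by linear_combination h
            have hv := ZMod.val_cast_of_lt htn
            rw [hc, ZMod.val_zero] at hv
            omega
          have hk2 : i + 1 + (t : ZMod n) = (i + (t : ZMod n)) + 1 := by ring
          rw [hk1, hBoth _ _ hrowne, hk2, hsub, if_neg ht1, if_neg ht2]
    rw [hreindex, Finset.prod_congr rfl hcongr]
    have hsplit : (∏ t ∈ Finset.range n,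
        (if t < K then d (i + 1 + (t : ZMod n)) else if t = K then (1 : R) else -1)) =
        (∏ l ∈ Finset.range K, d (i + 1 + (l : ZMod n))) * (-1) ^ L := by
      rw [← Finset.prod_range_mul_prod_Ico _ (show K + 1 ≤ n by omega)]
      rw [Finset.prod_range_succ, if_neg (lt_irrefl K), if_pos rfl, mul_one]
      congr 1
      · exact Finset.prod_congr rfl fun x hx => if_pos (Finset.mem_range.mp hx)
      · rw [Finset.prod_congr rfl (fun x hx => ?_), Finset.prod_const, Nat.card_Ico,
          show n - (K + 1) = L by omega]
        have hx' := Finset.mem_Ico.mp hx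
        rw [if_neg (by omega), if_neg (by omega)]
    rw [hsplit, hsign]
    rw [Units.smul_def]
    push_cast
    rw [zsmul_eq_mul]
    push_cast
    rw [show ((-1 : R) ^ L) * ((∏ l ∈ Finset.range K, d (i + 1 + (l : ZMod n))) * (-1) ^ L) =
      (∏ l ∈ Finset.range K, d (i + 1 + (l : ZMod n))) * ((-1) * (-1)) ^ L by
        rw [mul_pow]; ring]
    rw [neg_mul_neg, mul_one, one_pow, mul_one]
  · -- other terms vanish
    intro σ _ hne
    by_contra hterm
    have hprodne : (∏ k, B (σ k) k) ≠ 0 := by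
      intro h
      exact hterm (by rw [h, smul_zero])
    have hfac : ∀ k, B (σ k) k ≠ 0 := by
      intro k hk
      exact hprodne (Finset.prod_eq_zero (Finset.mem_univ k) hk)
    -- Step 1 : σ j = i
    have hσj : σ j = i := by
      have h := hfac (σ⁻¹ i)
      rw [← Equiv.Perm.mul_apply, mul_inv_cancel, Equiv.Perm.one_apply, hBrow] at h
      by_cases hc : σ⁻¹ i = j
      · rw [← hc, ← Equiv.Perm.mul_apply, mul_inv_cancel, Equiv.Perm.one_apply]
      · rw [if_neg hc] at h; exact absurd rfl h
    -- Step 2 : the bidiagonal constraint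
    have hstep : ∀ k, k ≠ j → σ k = k ∨ σ k = k - 1 := by
      intro k hk
      have hki : σ k ≠ i := by
        intro h
        exact hk (σ.injective (h.trans hσj.symm))
      have h := hfac k
      rw [hBoth _ _ hki] at h
      by_contra hcon
      push_neg at hcon
      refine h (hzero (σ k) k (fun h' => hcon.1 h'.symm) (fun h' => hcon.2 ?_))
      exact eq_sub_iff_add_eq.mpr h'.symm
    -- Step 3 : fixed points on the arc (i, j)
    have claimA : ∀ t, t < K → σ (i + 1 + (t : ZMod n)) = i + 1 + (t : ZMod n) := by
      intro t
      induction t with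
      | zero =>
        intro h0
        have hij : i + 1 ≠ j := by
          intro h
          have : (j - i - 1 : ZMod n) = 0 := by rw [← h]; ring
          rw [hKdef, this, ZMod.val_zero] at h0
          exact absurd h0 (lt_irrefl 0)
        rcases hstep (i + 1) hij with h | h
        · simpa using h
        · exfalso
          have : σ (i + 1) = σ j := by rw [hσj, h]; ring
          exact hij (σ.injective this)
      | succ t ih =>
        intro ht
        have ht' := ih (Nat.lt_of_succ_lt ht)
        have hne' : i + 1 + ((t + 1 : ℕ) : ZMod n) ≠ j := by
          intro h
          have hc : (j - i - 1 : ZMod n) = ((t + 1 : ℕ) : ZMod n) := by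
            rw [← h]; push_cast; ring
          have hc2 : K = t + 1 := by
            rw [hKdef, hc]; exact ZMod.val_cast_of_lt (lt_trans ht hKn)
          omega
        rcases hstep _ hne' with h | h
        · exact h
        · exfalso
          have hkm : i + 1 + ((t + 1 : ℕ) : ZMod n) - 1 = i + 1 + (t : ZMod n) := by
            push_cast; ring
          rw [hkm, ← ht'] at h
          have h3 := σ.injective h
          push_cast at h3
          apply h1
          linear_combination h3
    -- Step 4 : shifted points on the arc (j, i]
    have claimB : ∀ s, s < L → σ (i - (s : ZMod n)) = i - (s : ZMod n) - 1 := by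
      intro s
      induction s with
      | zero =>
        intro h0
        have hij : i ≠ j := by
          intro h
          rw [hLdef, h, sub_self, ZMod.val_zero] at h0
          exact absurd h0 (lt_irrefl 0)
        rcases hstep i hij with h | h
        · exact absurd (σ.injective (h.trans hσj.symm)) hij
        · simpa using h
      | succ s ih =>
        intro hs
        have hs' := ih (Nat.lt_of_succ_lt hs)
        have hne' : i - ((s + 1 : ℕ) : ZMod n) ≠ j := by
          intro h
          have hc : (i - j : ZMod n) = ((s + 1 : ℕ) : ZMod n) := by
            rw [← h]; push_cast; ring
          have hc2 : L = s + 1 := by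
            rw [hLdef, hc]; exact ZMod.val_cast_of_lt (lt_trans hs hLn)
          omega
        rcases hstep _ hne' with h | h
        · exfalso
          have hkm : i - ((s + 1 : ℕ) : ZMod n) = i - (s : ZMod n) - 1 := by
            push_cast; ring
          rw [hkm, ← hs'] at h
          have h3 := σ.injective h
          rw [h3] at hs'
          apply h1
          linear_combination hs'
        · exact h
    -- Step 5 : σ = σ₀
    apply hne
    apply Equiv.ext
    intro k
    set u := (i - k).val with hu
    have hcastu : ((u : ℕ) : ZMod n) = i - k := hback _
    have hun : u < n := ZMod.val_lt _
    rcases lt_trichotomy u L with hlt | heq | hgt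
    · have hk : i - (u : ZMod n) = k := by linear_combination -hcastu
      have h := claimB u hlt
      rw [hk] at h
      rw [h, hσ₀ k, if_pos hlt]
    · have hkj : k = j := by
        have hLc : ((L : ℕ) : ZMod n) = i - j := hback _
        rw [heq] at hcastu
        linear_combination hcastu - hLc
      rw [hkj, hσj, hσ₀ j]
      rw [show (i - j).val = L from rfl]
      rw [if_neg (lt_irrefl L), if_pos rfl]
    · have htK : n - 1 - u < K := by omega
      have hk : i + 1 + ((n - 1 - u : ℕ) : ZMod n) = k := by
        have h' : (n - 1 - u) + (1 + u) = n := by omega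
        have h'' := congrArg (Nat.cast : ℕ → ZMod n) h'
        push_cast at h''
        rw [ZMod.natCast_self] at h''
        linear_combination h'' - hcastu
      have h := claimA (n - 1 - u) htK
      rw [hk] at h
      rw [h, hσ₀ k, if_neg (by omega), if_neg (by omega)]
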